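/- arXiv:1407.5427 — 4 statements merged into one kernel-verified Lean document; each statement's English description precedes it below -/
import Mathlib

section
/- Let n, m, p be positive integers and let all norms be Euclidean. Let z̄ₖ, z̄ₖ₊₁, z*ₖ, z*ₖ₊₁, z∞ ∈ ℝⁿ, μ̄ₖ, μ*ₖ, μ*ₖ₊₁ ∈ ℝᵐ, sₖ, sₖ₊₁ ∈ ℝᵖ, let g : ℝⁿ → ℝᵐ, and let ρ, C, λ_g, λ_A, λ_F, λ_B, λ_G, q_B, r_B, δ be positive reals, M ≥ 1 a real, and θ̂ ∈ (1/2, 1). Set w̄ₖ := (z̄ₖ, μ̄ₖ), w*ₖ := (z*ₖ, μ*ₖ), w*ₖ₊₁ := (z*ₖ₊₁, μ*ₖ₊₁), w∞ := (z∞, μ̄ₖ + ρ·g(z∞)), w̄ₖ₊₁ := (z̄ₖ₊₁, μ̄ₖ + ρ·g(z̄ₖ₊₁)), d̄ := (μ̄ₖ − μ*ₖ)/ρ and d* := (μ*ₖ₊₁ − μ*ₖ)/ρ. Assume: (h1) there exists a map w* : ℝᵐ × ℝᵖ → ℝⁿ × ℝᵐ with w*(0, sₖ) = w*ₖ, w*(d*,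 sₖ₊₁) = w*ₖ₊₁, w*(d̄, sₖ₊₁) = w∞, and ‖w*(d, s) − w*(d′, s′)‖ ≤ λ_B·λ_G·√(‖d − d′‖² + ‖s − s′‖²) for all d, d′ with ‖d‖ < q_B, ‖d′‖ < q_B and all s, s′ with ‖s − sₖ‖ < r_B, ‖s′ − sₖ‖ < r_B; (h2) ‖μ*ₖ₊₁ − μ*ₖ‖ ≤ λ_A·λ_F·‖sₖ₊₁ − sₖ‖; (h3) if ‖z̄ₖ − z∞‖ < δ then ‖z̄ₖ₊₁ − z∞‖ ≤ C·M^(−ψ(θ̂))·‖z̄ₖ − z∞‖; (h4) ‖g(z̄ₖ₊₁) − g(z∞)‖ ≤ λ_g·‖z̄ₖ₊₁ − z∞‖. Further assume ‖sₖ₊₁ − sₖ‖ < min{r_B, q_B·ρ/(λ_A·λ_F)}, ‖w̄ₖ − w*ₖ‖ < q_B·ρ, and (1 + λ_G·λ_B/ρ)·‖w̄ₖ − w*ₖ‖ + λ_G·λ_B·‖sₖ₊₁ − sₖ‖ < δ. Then ‖w̄ₖ₊₁ − w*ₖ₊₁‖ ≤ β_w·‖w̄ₖ − w*ₖ‖ +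 β_s·‖sₖ₊₁ − sₖ‖, where β_w := C·(1 + ρ·λ_g)·(1 + λ_B·λ_G/ρ)·M^(−ψ(θ̂)) + λ_B·λ_G/ρ and β_s := C·(1 + ρ·λ_g)·λ_B·λ_G·M^(−ψ(θ̂)) + λ_B·λ_G·λ_A·λ_F/ρ. -/
lemma sqrt_sq_add_sq_le (x y : ℝ) (hx : 0 ≤ x) (hy : 0 ≤ y) :
    Real.sqrt (x ^ 2 + y ^ 2) ≤ x + y := by
  rw [show x + y = Real.sqrt ((x + y) ^ 2) by
    rw [Real.sqrt_sq (by positivity)]]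
  apply Real.sqrt_le_sqrt; nlinarith [mul_nonneg hx hy]

lemma left_le_sqrt_sq_add_sq (x y : ℝ) (hx : 0 ≤ x) :
    x ≤ Real.sqrt (x ^ 2 + y ^ 2) := by
  rw [Real.le_sqrt hx]; · nlinarith [sq_nonneg y]
  all_goals positivity

lemma right_le_sqrt_sq_add_sq (x y : ℝ) (hy : 0 ≤ y) :
    y ≤ Real.sqrt (x ^ 2 + y ^ 2) := by
  rw [Real.le_sqrt hy]; · nlinarith [sq_nonneg x]
  all_goals positivity

lemma l2_triangle (x1 x2 y1 y2 : ℝ) :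
    Real.sqrt ((x1 + x2) ^ 2 + (y1 + y2) ^ 2)
      ≤ Real.sqrt (x1 ^ 2 + y1 ^ 2) + Real.sqrt (x2 ^ 2 + y2 ^ 2) := by
  set s1 := Real.sqrt (x1 ^ 2 + y1 ^ 2) with hs1d
  set s2 := Real.sqrt (x2 ^ 2 + y2 ^ 2) with hs2d
  have hs1 : 0 ≤ s1 := Real.sqrt_nonneg _
  have hs2 : 0 ≤ s2 := Real.sqrt_nonneg _
  have e1 : s1 ^ 2 = x1 ^ 2 + y1 ^ 2 := Real.sq_sqrt (by positivity)
  have e2 : s2 ^ 2 = x2 ^ 2 + y2 ^ 2 := Real.sq_sqrt (by positivity)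
  have key : x1 * x2 + y1 * y2 ≤ s1 * s2 := by
    nlinarith [sq_nonneg (x1 * y2 - x2 * y1), sq_nonneg (s1 * s2 - x1 * x2 - y1 * y2),
      mul_nonneg hs1 hs2, sq_nonneg (s1 * s2 + x1 * x2 + y1 * y2)]
  rw [show s1 + s2 = Real.sqrt ((s1 + s2) ^ 2) by rw [Real.sqrt_sq (by positivity)]]
  apply Real.sqrt_le_sqrt; nlinarith

set_option maxHeartbeats 1000000 in
theorem contraction_estimate
    (n m p : ℕ) (hn : 0 < n) (hm : 0 < m) (hp : 0 < p)
    (zbk zbk1 zsk zsk1 zinf : EuclideanSpace ℝ (Fin n))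
    (μbk μsk μsk1 : EuclideanSpace ℝ (Fin m))
    (sk sk1 : EuclideanSpace ℝ (Fin p))
    (g : EuclideanSpace ℝ (Fin n) → EuclideanSpace ℝ (Fin m))
    (ρ C lg lA lF lB lG qB rB δ M θhat : ℝ)
    (hρ : 0 < ρ) (hC : 0 < C) (hlg : 0 < lg) (hlA : 0 < lA) (hlF : 0 < lF)
    (hlB : 0 < lB) (hlG : 0 < lG) (hqB : 0 < qB) (hrB : 0 < rB) (hδ : 0 < δ)
    (hM : 1 ≤ M) (hθ1 : 1 / 2 < θhat) (hθ2 : θhat < 1)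
    (h1 : ∃ w : EuclideanSpace ℝ (Fin m) × EuclideanSpace ℝ (Fin p) →
            EuclideanSpace ℝ (Fin n) × EuclideanSpace ℝ (Fin m),
        w (0, sk) = (zsk, μsk) ∧
        w (ρ⁻¹ • (μsk1 - μsk), sk1) = (zsk1, μsk1) ∧
        w (ρ⁻¹ • (μbk - μsk), sk1) = (zinf, μbk + ρ • g zinf) ∧
        ∀ d d' : EuclideanSpace ℝ (Fin m), ∀ s s' : EuclideanSpace ℝ (Fin p),
          ‖d‖ < qB → ‖d'‖ < qB → ‖s - sk‖ < rB → ‖s' - sk‖ < rB →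
          Real.sqrt (‖(w (d, s)).1 - (w (d', s')).1‖ ^ 2 +
              ‖(w (d, s)).2 - (w (d', s')).2‖ ^ 2)
            ≤ lB * lG * Real.sqrt (‖d - d'‖ ^ 2 + ‖s - s'‖ ^ 2))
    (h2 : ‖μsk1 - μsk‖ ≤ lA * lF * ‖sk1 - sk‖)
    (h3 : ‖zbk - zinf‖ < δ →
        ‖zbk1 - zinf‖ ≤ C * M ^ (-((1 - θhat) / (2 * θhat - 1))) * ‖zbk - zinf‖)
    (h4 : ‖g zbk1 - g zinf‖ ≤ lg * ‖zbk1 - zinf‖)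
    (hs : ‖sk1 - sk‖ < min rB (qB * ρ / (lA * lF)))
    (hw : Real.sqrt (‖zbk - zsk‖ ^ 2 + ‖μbk - μsk‖ ^ 2) < qB * ρ)
    (hδball : (1 + lG * lB / ρ) * Real.sqrt (‖zbk - zsk‖ ^ 2 + ‖μbk - μsk‖ ^ 2)
        + lG * lB * ‖sk1 - sk‖ < δ) :
    Real.sqrt (‖zbk1 - zsk1‖ ^ 2 + ‖(μbk + ρ • g zbk1) - μsk1‖ ^ 2)
      ≤ (C * (1 + ρ * lg) * (1 + lB * lG / ρ) * M ^ (-((1 - θhat) / (2 * θhat - 1)))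
            + lB * lG / ρ) *
          Real.sqrt (‖zbk - zsk‖ ^ 2 + ‖μbk - μsk‖ ^ 2)
        + (C * (1 + ρ * lg) * lB * lG * M ^ (-((1 - θhat) / (2 * θhat - 1)))
            + lB * lG * lA * lF / ρ) * ‖sk1 - sk‖ := by
  obtain ⟨w, hw0, hw1, hwinf, hlip⟩ := h1
  have hM0 : (0 : ℝ) < M := by linarith
  set K : ℝ := C * M ^ (-((1 - θhat) / (2 * θhat - 1))) with hKdef
  have hK0 : 0 ≤ K := by
    have := Real.rpow_pos_of_pos hM0 (-((1 - θhat) / (2 * θhat - 1)))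
    positivity
  set a : ℝ := ‖zbk - zsk‖ with had
  set b : ℝ := ‖μbk - μsk‖ with hbd
  set W : ℝ := Real.sqrt (a ^ 2 + b ^ 2) with hWd
  set S : ℝ := ‖sk1 - sk‖ with hSd
  have hW0 : 0 ≤ W := Real.sqrt_nonneg _
  have hS0 : 0 ≤ S := norm_nonneg _
  have haW : a ≤ W := left_le_sqrt_sq_add_sq _ _ (norm_nonneg _)
  have hbW : b ≤ W := right_le_sqrt_sq_add_sq _ _ (norm_nonneg _)
  -- norms of the d's
  have hdbar_norm : ‖ρ⁻¹ • (μbk - μsk)‖ = b / ρ := by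
    rw [norm_smul, norm_inv, Real.norm_eq_abs, abs_of_pos hρ]
    field_simp
    exact hbd.symm
  have hdstar_norm : ‖ρ⁻¹ • (μsk1 - μsk)‖ = ‖μsk1 - μsk‖ / ρ := by
    rw [norm_smul, norm_inv, Real.norm_eq_abs, abs_of_pos hρ]
    field_simp
  have hdbar_lt : ‖ρ⁻¹ • (μbk - μsk)‖ < qB := by
    rw [hdbar_norm]
    rw [div_lt_iff₀ hρ]
    calc b ≤ W := hbW
    _ < qB * ρ := hw
  have hdstar_lt : ‖ρ⁻¹ • (μsk1 - μsk)‖ < qB := by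
    rw [hdstar_norm, div_lt_iff₀ hρ]
    have hsq : S < qB * ρ / (lA * lF) := lt_of_lt_of_le hs (min_le_right _ _)
    calc ‖μsk1 - μsk‖ ≤ lA * lF * S := h2
    _ < lA * lF * (qB * ρ / (lA * lF)) := by
        apply mul_lt_mul_of_pos_left hsq (by positivity)
    _ = qB * ρ := by field_simp
  have hsrB : S < rB := lt_of_lt_of_le hs (min_le_left _ _)
  have h0qB : ‖(0 : EuclideanSpace ℝ (Fin m))‖ < qB := by simpa using hqB
  have hskrB : ‖sk - sk‖ < rB := by simpa using hrB
  -- Estimate E1 : distance from (zinf, μbk+ρ g zinf) to (zsk, μsk)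
  have E1 := hlip (ρ⁻¹ • (μbk - μsk)) 0 sk1 sk hdbar_lt h0qB hsrB hskrB
  rw [hwinf, hw0] at E1
  simp only [sub_zero] at E1
  have E1' : Real.sqrt (‖zinf - zsk‖ ^ 2 + ‖(μbk + ρ • g zinf) - μsk‖ ^ 2)
      ≤ lB * lG * (b / ρ + S) := by
    refine le_trans E1 ?_
    apply mul_le_mul_of_nonneg_left _ (by positivity)
    rw [hdbar_norm]
    exact sqrt_sq_add_sq_le _ _ (by positivity) hS0
  -- Estimate E2 : distance from (zinf, μbk+ρ g zinf) to (zsk1, μsk1)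
  have E2 := hlip (ρ⁻¹ • (μbk - μsk)) (ρ⁻¹ • (μsk1 - μsk)) sk1 sk1 hdbar_lt hdstar_lt hsrB hsrB
  rw [hwinf, hw1] at E2
  have hdiff : ρ⁻¹ • (μbk - μsk) - ρ⁻¹ • (μsk1 - μsk) = ρ⁻¹ • (μbk - μsk1) := by
    rw [← smul_sub]; congr 1; abel
  rw [hdiff] at E2
  simp only [sub_self, norm_zero] at E2
  have hnz : Real.sqrt (‖ρ⁻¹ • (μbk - μsk1)‖ ^ 2 + (0:ℝ) ^ 2) = ‖ρ⁻¹ • (μbk - μsk1)‖ := by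
    rw [show (0:ℝ) ^ 2 = 0 by ring, add_zero, Real.sqrt_sq (norm_nonneg _)]
  rw [hnz] at E2
  have hμbk1 : ‖ρ⁻¹ • (μbk - μsk1)‖ ≤ (b + lA * lF * S) / ρ := by
    rw [norm_smul, norm_inv, Real.norm_eq_abs, abs_of_pos hρ]
    rw [inv_mul_eq_div, div_le_div_iff_of_pos_right hρ]
    calc ‖μbk - μsk1‖ ≤ ‖μbk - μsk‖ + ‖μsk1 - μsk‖ := by
          rw [show μbk - μsk1 = (μbk - μsk) - (μsk1 - μsk) by abel]
          exact norm_sub_le _ _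
    _ ≤ b + lA * lF * S := by rw [← hbd]; exact add_le_add le_rfl h2
  have E2' : Real.sqrt (‖zinf - zsk1‖ ^ 2 + ‖(μbk + ρ • g zinf) - μsk1‖ ^ 2)
      ≤ lB * lG * ((b + lA * lF * S) / ρ) :=
    le_trans E2 (mul_le_mul_of_nonneg_left hμbk1 (by positivity))
  -- zbk is δ-close to zinf
  have hzinf_zsk : ‖zinf - zsk‖ ≤ lB * lG * (b / ρ + S) :=
    le_trans (left_le_sqrt_sq_add_sq _ _ (norm_nonneg _)) E1'
  have hmono : lB * lG / ρ * b ≤ lB * lG / ρ * W :=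
    mul_le_mul_of_nonneg_left hbW (by positivity)
  have htri : ‖zbk - zinf‖ ≤ a + ‖zinf - zsk‖ := by
    calc ‖zbk - zinf‖ ≤ ‖zbk - zsk‖ + ‖zsk - zinf‖ := by
          rw [show zbk - zinf = (zbk - zsk) + (zsk - zinf) by abel]
          exact norm_add_le _ _
    _ = a + ‖zinf - zsk‖ := by rw [norm_sub_rev zsk zinf, had]
  have hbound : ‖zbk - zinf‖ ≤ (1 + lB * lG / ρ) * W + lB * lG * S := by
    calc ‖zbk - zinf‖ ≤ a + ‖zinf - zsk‖ := htri
    _ ≤ a + lB * lG * (b / ρ + S) := add_le_add le_rfl hzinf_zsk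
    _ ≤ (1 + lB * lG / ρ) * W + lB * lG * S := by
        have e : lB * lG * (b / ρ + S) = lB * lG / ρ * b + lB * lG * S := by ring
        linarith [hmono, haW]
  have hzbk_zinf : ‖zbk - zinf‖ < δ := by
    refine lt_of_le_of_lt hbound ?_
    have : (1 + lB * lG / ρ) * W + lB * lG * S
        = (1 + lG * lB / ρ) * W + lG * lB * S := by ring
    rw [this]; exact hδball
  have h3' := h3 hzbk_zinf
  -- main chain
  have hzbk1 : ‖zbk1 - zinf‖ ≤ K * ((1 + lB * lG / ρ) * W + lB * lG * S) :=
    le_trans h3' (mul_le_mul_of_nonneg_left hbound hK0)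
  -- assemble
  set A1 : ℝ := ‖zbk1 - zinf‖ with hA1d
  set B1 : ℝ := ‖(μbk + ρ • g zbk1) - (μbk + ρ • g zinf)‖ with hB1d
  set A2 : ℝ := ‖zinf - zsk1‖ with hA2d
  set B2 : ℝ := ‖(μbk + ρ • g zinf) - μsk1‖ with hB2d
  have hB1 : B1 ≤ ρ * lg * A1 := by
    rw [hB1d, show (μbk + ρ • g zbk1) - (μbk + ρ • g zinf) = ρ • (g zbk1 - g zinf) by
      rw [smul_sub]; abel]
    rw [norm_smul, Real.norm_eq_abs, abs_of_pos hρ, mul_assoc]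
    exact mul_le_mul_of_nonneg_left h4 hρ.le
  have hA : ‖zbk1 - zsk1‖ ≤ A1 + A2 := by
    rw [show zbk1 - zsk1 = (zbk1 - zinf) + (zinf - zsk1) by abel]
    exact norm_add_le _ _
  have hB : ‖(μbk + ρ • g zbk1) - μsk1‖ ≤ B1 + B2 := by
    rw [show (μbk + ρ • g zbk1) - μsk1
        = ((μbk + ρ • g zbk1) - (μbk + ρ • g zinf)) + ((μbk + ρ • g zinf) - μsk1) by abel]
    exact norm_add_le _ _
  have step1 : Real.sqrt (‖zbk1 - zsk1‖ ^ 2 + ‖(μbk + ρ • g zbk1) - μsk1‖ ^ 2)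
      ≤ Real.sqrt ((A1 + A2) ^ 2 + (B1 + B2) ^ 2) := by
    apply Real.sqrt_le_sqrt
    have h1' := pow_le_pow_left₀ (norm_nonneg _) hA 2
    have h2' := pow_le_pow_left₀ (norm_nonneg _) hB 2
    linarith
  have step2 := l2_triangle A1 A2 B1 B2
  have step3 : Real.sqrt (A1 ^ 2 + B1 ^ 2) ≤ A1 + B1 :=
    sqrt_sq_add_sq_le _ _ (norm_nonneg _) (norm_nonneg _)
  have step4 : Real.sqrt (A2 ^ 2 + B2 ^ 2) ≤ lB * lG * ((b + lA * lF * S) / ρ) := E2'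
  have final : A1 + B1 ≤ (1 + ρ * lg) * (K * ((1 + lB * lG / ρ) * W + lB * lG * S)) := by
    have hA10 : (0:ℝ) ≤ A1 := norm_nonneg _
    have step : A1 + B1 ≤ (1 + ρ * lg) * A1 := by linarith [hB1]
    refine le_trans step ?_
    exact mul_le_mul_of_nonneg_left hzbk1 (by positivity)
  calc Real.sqrt (‖zbk1 - zsk1‖ ^ 2 + ‖(μbk + ρ • g zbk1) - μsk1‖ ^ 2)
      ≤ Real.sqrt ((A1 + A2) ^ 2 + (B1 + B2) ^ 2) := step1
    _ ≤ Real.sqrt (A1 ^ 2 + B1 ^ 2) + Real.sqrt (A2 ^ 2 + B2 ^ 2) := step2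
    _ ≤ (A1 + B1) + lB * lG * ((b + lA * lF * S) / ρ) := add_le_add step3 step4
    _ ≤ (1 + ρ * lg) * (K * ((1 + lB * lG / ρ) * W + lB * lG * S))
          + lB * lG * ((b + lA * lF * S) / ρ) := by linarith
    _ ≤ (K * (1 + ρ * lg) * (1 + lB * lG / ρ) + lB * lG / ρ) * W
          + (K * (1 + ρ * lg) * lB * lG + lB * lG * lA * lF / ρ) * S := by
        have e : lB * lG * ((b + lA * lF * S) / ρ)
            = lB * lG / ρ * b + lB * lG * lA * lF / ρ * S := by ring
        have e2 : (1 + ρ * lg) * (K * ((1 + lB * lG / ρ) * W + lB * lG * S))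
            = (K * (1 + ρ * lg) * (1 + lB * lG / ρ)) * W
              + (K * (1 + ρ * lg) * lB * lG) * S := by ring
        linarith [hmono]
    _ = (C * (1 + ρ * lg) * (1 + lB * lG / ρ) * M ^ (-((1 - θhat) / (2 * θhat - 1)))
            + lB * lG / ρ) * W
        + (C * (1 + ρ * lg) * lB * lG * M ^ (-((1 - θhat) / (2 * θhat - 1)))
            + lB * lG * lA * lF / ρ) * S := by rw [hKdef]; ring
end

section
/- Let m, p be positive integers, all norms Euclidean. Let μ̄ₖ, μ*ₖ, μ*ₖ₊₁ ∈ ℝᵐ, sₖ, sₖ₊₁ ∈ ℝᵖ, let w̄ₖ, w*ₖ, w*ₖ₊₁, w∞ be points of ℝⁿ × ℝᵐ with w̄ₖ = (z̄ₖ, μ̄ₖ) and w*ₖ = (z*ₖ, μ*ₖ), and let ρ, λ_A, λ_F, λ_B, λ_G, q_B, r_B be positive reals. Set d̄ := (μ̄ₖ − μ*ₖ)/ρ and d* := (μ*ₖ₊₁ − μ*ₖ)/ρ. Assume: (h1) there exists a map w* : ℝᵐ × ℝᵖ → ℝⁿ × ℝᵐ with w*(d*, sₖ₊₁) = w*ₖ₊₁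 and w*(d̄, sₖ₊₁) = w∞, and ‖w*(d, s) − w*(d′, s′)‖ ≤ λ_B·λ_G·√(‖d − d′‖² + ‖s − s′‖²) for all d, d′ with ‖d‖ < q_B, ‖d′‖ < q_B and all s, s′ with ‖s − sₖ‖ < r_B, ‖s′ − sₖ‖ < r_B; (h2) ‖μ*ₖ₊₁ − μ*ₖ‖ ≤ λ_A·λ_F·‖sₖ₊₁ − sₖ‖. If ‖sₖ₊₁ − sₖ‖ < min{r_B, q_B·ρ/(λ_A·λ_F)} and ‖w̄ₖ − w*ₖ‖ < q_B·ρ, then ‖w∞ − w*ₖ₊₁‖ ≤ (λ_B·λ_G/ρ)·(‖w̄ₖ − w*ₖ‖ + λ_A·λ_F·‖sₖ₊₁ − sₖ‖). -/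
theorem bound_winf_to_wstar
    (n m p : ℕ) (hn : 0 < n) (hm : 0 < m) (hp : 0 < p)
    (zbk zsk : EuclideanSpace ℝ (Fin n))
    (μbk μsk μsk1 : EuclideanSpace ℝ (Fin m))
    (sk sk1 : EuclideanSpace ℝ (Fin p))
    (winf wsk1 : EuclideanSpace ℝ (Fin n) × EuclideanSpace ℝ (Fin m))
    (ρ lA lF lB lG qB rB : ℝ)
    (hρ : 0 < ρ) (hlA : 0 < lA) (hlF : 0 < lF) (hlB : 0 < lB) (hlG : 0 < lG)
    (hqB : 0 < qB) (hrB : 0 < rB)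
    (h1 : ∃ w : EuclideanSpace ℝ (Fin m) × EuclideanSpace ℝ (Fin p) →
            EuclideanSpace ℝ (Fin n) × EuclideanSpace ℝ (Fin m),
        w (ρ⁻¹ • (μsk1 - μsk), sk1) = wsk1 ∧
        w (ρ⁻¹ • (μbk - μsk), sk1) = winf ∧
        ∀ d d' : EuclideanSpace ℝ (Fin m), ∀ s s' : EuclideanSpace ℝ (Fin p),
          ‖d‖ < qB → ‖d'‖ < qB → ‖s - sk‖ < rB → ‖s' - sk‖ < rB →
          Real.sqrt (‖(w (d, s)).1 - (w (d', s')).1‖ ^ 2 +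
              ‖(w (d, s)).2 - (w (d', s')).2‖ ^ 2)
            ≤ lB * lG * Real.sqrt (‖d - d'‖ ^ 2 + ‖s - s'‖ ^ 2))
    (h2 : ‖μsk1 - μsk‖ ≤ lA * lF * ‖sk1 - sk‖)
    (hs : ‖sk1 - sk‖ < min rB (qB * ρ / (lA * lF)))
    (hw : Real.sqrt (‖zbk - zsk‖ ^ 2 + ‖μbk - μsk‖ ^ 2) < qB * ρ) :
    Real.sqrt (‖winf.1 - wsk1.1‖ ^ 2 + ‖winf.2 - wsk1.2‖ ^ 2)
      ≤ (lB * lG / ρ) *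
          (Real.sqrt (‖zbk - zsk‖ ^ 2 + ‖μbk - μsk‖ ^ 2) + lA * lF * ‖sk1 - sk‖) := by
  obtain ⟨w, hw1, hw2, hlip⟩ := h1
  have hsrB : ‖sk1 - sk‖ < rB := lt_of_lt_of_le hs (min_le_left _ _)
  have hsq : ‖sk1 - sk‖ < qB * ρ / (lA * lF) := lt_of_lt_of_le hs (min_le_right _ _)
  have hμle : ‖μbk - μsk‖ ≤ Real.sqrt (‖zbk - zsk‖ ^ 2 + ‖μbk - μsk‖ ^ 2) := by
    exact (Real.le_sqrt (norm_nonneg _) (by positivity)).mpr (by nlinarith [sq_nonneg ‖zbk - zsk‖])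
  have hμbk : ‖μbk - μsk‖ < qB * ρ := lt_of_le_of_lt hμle hw
  have hd : ‖ρ⁻¹ • (μbk - μsk)‖ < qB := by
    rw [norm_smul, norm_inv, Real.norm_of_nonneg hρ.le]
    rw [inv_mul_lt_iff₀ hρ, mul_comm]
    exact hμbk
  have hμsk1 : ‖μsk1 - μsk‖ < qB * ρ := by
    calc ‖μsk1 - μsk‖ ≤ lA * lF * ‖sk1 - sk‖ := h2
      _ < lA * lF * (qB * ρ / (lA * lF)) := by
          exact mul_lt_mul_of_pos_left hsq (by positivity)
      _ = qB * ρ := by field_simp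
  have hd' : ‖ρ⁻¹ • (μsk1 - μsk)‖ < qB := by
    rw [norm_smul, norm_inv, Real.norm_of_nonneg hρ.le]
    rw [inv_mul_lt_iff₀ hρ, mul_comm]
    exact hμsk1
  have key := hlip (ρ⁻¹ • (μbk - μsk)) (ρ⁻¹ • (μsk1 - μsk)) sk1 sk1 hd hd' hsrB hsrB
  rw [hw1, hw2] at key
  have hnorm : ‖ρ⁻¹ • (μbk - μsk) - ρ⁻¹ • (μsk1 - μsk)‖
      = ρ⁻¹ * ‖μbk - μsk1‖ := by
    rw [← smul_sub, norm_smul, norm_inv, Real.norm_of_nonneg hρ.le]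
    congr 2
    abel
  have hrhs : Real.sqrt (‖ρ⁻¹ • (μbk - μsk) - ρ⁻¹ • (μsk1 - μsk)‖ ^ 2 + ‖sk1 - sk1‖ ^ 2)
      = ρ⁻¹ * ‖μbk - μsk1‖ := by
    rw [sub_self, norm_zero]
    simp [hnorm, Real.sqrt_sq (by positivity : (0:ℝ) ≤ ρ⁻¹ * ‖μbk - μsk1‖)]
  rw [hrhs] at key
  refine le_trans key ?_
  have htri : ‖μbk - μsk1‖ ≤ ‖μbk - μsk‖ + ‖μsk1 - μsk‖ := by
    calc ‖μbk - μsk1‖ = ‖(μbk - μsk) - (μsk1 - μsk)‖ := by congr 1; abel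
      _ ≤ ‖μbk - μsk‖ + ‖μsk1 - μsk‖ := norm_sub_le _ _
  have h3 : ‖μbk - μsk1‖ ≤ Real.sqrt (‖zbk - zsk‖ ^ 2 + ‖μbk - μsk‖ ^ 2) + lA * lF * ‖sk1 - sk‖ :=
    le_trans htri (add_le_add hμle h2)
  calc lB * lG * (ρ⁻¹ * ‖μbk - μsk1‖)
      ≤ lB * lG * (ρ⁻¹ * (Real.sqrt (‖zbk - zsk‖ ^ 2 + ‖μbk - μsk‖ ^ 2) + lA * lF * ‖sk1 - sk‖)) := by
        refine mul_le_mul_of_nonneg_left (mul_le_mul_of_nonneg_left h3 (by positivity)) (by positivity)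
    _ = (lB * lG / ρ) * (Real.sqrt (‖zbk - zsk‖ ^ 2 + ‖μbk - μsk‖ ^ 2) + lA * lF * ‖sk1 - sk‖) := by
        ring
end

section
/- Let n, m, p be positive integers, all norms Euclidean. Let z̄ₖ, z̄ₖ₊₁, z*ₖ, z∞ ∈ ℝⁿ, μ̄ₖ, μ*ₖ ∈ ℝᵐ, sₖ, sₖ₊₁ ∈ ℝᵖ, g : ℝⁿ → ℝᵐ, and let ρ, C, λ_g, λ_B, λ_G, q_B, r_B, δ be positive reals, M ≥ 1 a real, θ̂ ∈ (1/2, 1). Set w̄ₖ := (z̄ₖ, μ̄ₖ), w*ₖ := (z*ₖ, μ*ₖ), w∞ := (z∞, μ̄ₖ + ρ·g(z∞)), w̄ₖ₊₁ := (z̄ₖ₊₁, μ̄ₖ + ρ·g(z̄ₖ₊₁)), d̄ := (μ̄ₖ − μ*ₖ)/ρ. Assume: (h1) there exists a map w* : ℝᵐ × ℝᵖ → ℝⁿ × ℝᵐ with w*(0, sₖ) = w*ₖ and w*(d̄, sₖ₊₁) = w∞, and ‖w*(d, s) − w*(d′, s′)‖ ≤ λ_B·λ_G·√(‖d − d′‖²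 + ‖s − s′‖²) for all d, d′ with ‖d‖ < q_B, ‖d′‖ < q_B and all s, s′ with ‖s − sₖ‖ < r_B, ‖s′ − sₖ‖ < r_B; (h3) if ‖z̄ₖ − z∞‖ < δ then ‖z̄ₖ₊₁ − z∞‖ ≤ C·M^(−ψ(θ̂))·‖z̄ₖ − z∞‖; (h4) ‖g(z̄ₖ₊₁) − g(z∞)‖ ≤ λ_g·‖z̄ₖ₊₁ − z∞‖. If ‖sₖ₊₁ − sₖ‖ < r_B, ‖w̄ₖ − w*ₖ‖ < q_B·ρ, and (1 + λ_G·λ_B/ρ)·q_B·ρ + λ_G·λ_B·r_B < δ, then ‖w̄ₖ₊₁ − w∞‖ ≤ C·(1 + ρ·λ_g)·M^(−ψ(θ̂))·( λ_B·λ_G·‖sₖ₊₁ − sₖ‖ + (1 + λ_B·λ_G/ρ)·‖w̄ₖ − w*ₖ‖ ). -/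
set_option maxHeartbeats 1000000 in
theorem bound_truncation_error
    (n m p : ℕ) (hn : 0 < n) (hm : 0 < m) (hp : 0 < p)
    (zbk zbk1 zsk zinf : EuclideanSpace ℝ (Fin n))
    (μbk μsk : EuclideanSpace ℝ (Fin m))
    (sk sk1 : EuclideanSpace ℝ (Fin p))
    (g : EuclideanSpace ℝ (Fin n) → EuclideanSpace ℝ (Fin m))
    (ρ C lg lB lG qB rB δ M θhat : ℝ)
    (hρ : 0 < ρ) (hC : 0 < C) (hlg : 0 < lg) (hlB : 0 < lB) (hlG : 0 < lG)
    (hqB : 0 < qB) (hrB : 0 < rB) (hδ : 0 < δ)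
    (hM : 1 ≤ M) (hθ1 : 1 / 2 < θhat) (hθ2 : θhat < 1)
    (h1 : ∃ w : EuclideanSpace ℝ (Fin m) × EuclideanSpace ℝ (Fin p) →
            EuclideanSpace ℝ (Fin n) × EuclideanSpace ℝ (Fin m),
        w (0, sk) = (zsk, μsk) ∧
        w (ρ⁻¹ • (μbk - μsk), sk1) = (zinf, μbk + ρ • g zinf) ∧
        ∀ d d' : EuclideanSpace ℝ (Fin m), ∀ s s' : EuclideanSpace ℝ (Fin p),
          ‖d‖ < qB → ‖d'‖ < qB → ‖s - sk‖ < rB → ‖s' - sk‖ < rB →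
          Real.sqrt (‖(w (d, s)).1 - (w (d', s')).1‖ ^ 2 +
              ‖(w (d, s)).2 - (w (d', s')).2‖ ^ 2)
            ≤ lB * lG * Real.sqrt (‖d - d'‖ ^ 2 + ‖s - s'‖ ^ 2))
    (h3 : ‖zbk - zinf‖ < δ →
        ‖zbk1 - zinf‖ ≤ C * M ^ (-((1 - θhat) / (2 * θhat - 1))) * ‖zbk - zinf‖)
    (h4 : ‖g zbk1 - g zinf‖ ≤ lg * ‖zbk1 - zinf‖)
    (hs : ‖sk1 - sk‖ < rB)
    (hw : Real.sqrt (‖zbk - zsk‖ ^ 2 + ‖μbk - μsk‖ ^ 2) < qB * ρ)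
    (hδball : (1 + lG * lB / ρ) * (qB * ρ) + lG * lB * rB < δ) :
    Real.sqrt (‖zbk1 - zinf‖ ^ 2 +
        ‖(μbk + ρ • g zbk1) - (μbk + ρ • g zinf)‖ ^ 2)
      ≤ C * (1 + ρ * lg) * M ^ (-((1 - θhat) / (2 * θhat - 1))) *
          (lB * lG * ‖sk1 - sk‖ +
            (1 + lB * lG / ρ) * Real.sqrt (‖zbk - zsk‖ ^ 2 + ‖μbk - μsk‖ ^ 2)) := by
  obtain ⟨w, hw0, hwinf, hL⟩ := h1
  set ψ : ℝ := M ^ (-((1 - θhat) / (2 * θhat - 1))) with hψdef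
  have hψ : 0 < ψ := Real.rpow_pos_of_pos (by linarith) _
  set W : ℝ := Real.sqrt (‖zbk - zsk‖ ^ 2 + ‖μbk - μsk‖ ^ 2) with hWdef
  have hWnn : 0 ≤ W := Real.sqrt_nonneg _
  have hzW : ‖zbk - zsk‖ ≤ W := by
    have h := Real.sqrt_le_sqrt (show ‖zbk - zsk‖ ^ 2 ≤ ‖zbk - zsk‖ ^ 2 + ‖μbk - μsk‖ ^ 2 by
      nlinarith [sq_nonneg ‖μbk - μsk‖])
    rwa [Real.sqrt_sq (norm_nonneg _)] at h
  have hμW : ‖μbk - μsk‖ ≤ W := by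
    have h := Real.sqrt_le_sqrt (show ‖μbk - μsk‖ ^ 2 ≤ ‖zbk - zsk‖ ^ 2 + ‖μbk - μsk‖ ^ 2 by
      nlinarith [sq_nonneg ‖zbk - zsk‖])
    rwa [Real.sqrt_sq (norm_nonneg _)] at h
  have hdnorm : ‖ρ⁻¹ • (μbk - μsk)‖ = ρ⁻¹ * ‖μbk - μsk‖ := by
    rw [norm_smul, Real.norm_eq_abs, abs_of_pos (inv_pos.mpr hρ)]
  have hdlt : ‖ρ⁻¹ • (μbk - μsk)‖ < qB := by
    rw [hdnorm]
    have h1 : ‖μbk - μsk‖ < qB * ρ := lt_of_le_of_lt hμW hw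
    calc ρ⁻¹ * ‖μbk - μsk‖ < ρ⁻¹ * (qB * ρ) :=
          mul_lt_mul_of_pos_left h1 (inv_pos.mpr hρ)
      _ = qB := by field_simp
  have hkey := hL (ρ⁻¹ • (μbk - μsk)) 0 sk1 sk hdlt (by simpa using hqB)
    (by simpa using hs) (by simpa using hrB)
  rw [hwinf, hw0] at hkey
  simp only at hkey
  have hd0 : ‖ρ⁻¹ • (μbk - μsk) - 0‖ = ρ⁻¹ * ‖μbk - μsk‖ := by
    rw [sub_zero]; exact hdnorm
  have hsplit : Real.sqrt (‖ρ⁻¹ • (μbk - μsk) - 0‖ ^ 2 + ‖sk1 - sk‖ ^ 2)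
      ≤ ρ⁻¹ * ‖μbk - μsk‖ + ‖sk1 - sk‖ := by
    rw [hd0]
    have ha : (0:ℝ) ≤ ρ⁻¹ * ‖μbk - μsk‖ := by positivity
    have hb : (0:ℝ) ≤ ‖sk1 - sk‖ := norm_nonneg _
    have h := Real.sqrt_le_sqrt (show (ρ⁻¹ * ‖μbk - μsk‖) ^ 2 + ‖sk1 - sk‖ ^ 2
        ≤ (ρ⁻¹ * ‖μbk - μsk‖ + ‖sk1 - sk‖) ^ 2 by nlinarith [mul_nonneg ha hb])
    rwa [Real.sqrt_sq (by positivity)] at h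
  have hzinf : ‖zinf - zsk‖ ≤ lB * lG * (ρ⁻¹ * ‖μbk - μsk‖ + ‖sk1 - sk‖) := by
    have hfst : ‖zinf - zsk‖
        ≤ Real.sqrt (‖zinf - zsk‖ ^ 2 + ‖(μbk + ρ • g zinf) - μsk‖ ^ 2) := by
      have h := Real.sqrt_le_sqrt (show ‖zinf - zsk‖ ^ 2
          ≤ ‖zinf - zsk‖ ^ 2 + ‖(μbk + ρ • g zinf) - μsk‖ ^ 2 by
        nlinarith [sq_nonneg ‖(μbk + ρ • g zinf) - μsk‖])
      rwa [Real.sqrt_sq (norm_nonneg _)] at h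
    calc ‖zinf - zsk‖ ≤ _ := hfst
      _ ≤ lB * lG * Real.sqrt (‖ρ⁻¹ • (μbk - μsk) - 0‖ ^ 2 + ‖sk1 - sk‖ ^ 2) := hkey
      _ ≤ lB * lG * (ρ⁻¹ * ‖μbk - μsk‖ + ‖sk1 - sk‖) :=
          mul_le_mul_of_nonneg_left hsplit (by positivity)
  have hRbound : ‖zbk - zinf‖
      ≤ lB * lG * ‖sk1 - sk‖ + (1 + lB * lG / ρ) * W := by
    have htri : ‖zbk - zinf‖ ≤ ‖zbk - zsk‖ + ‖zinf - zsk‖ := by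
      calc ‖zbk - zinf‖ = ‖(zbk - zsk) - (zinf - zsk)‖ := by abel_nf
        _ ≤ ‖zbk - zsk‖ + ‖zinf - zsk‖ := norm_sub_le _ _
    have hA : lB * lG * (ρ⁻¹ * ‖μbk - μsk‖ + ‖sk1 - sk‖)
        = lB * lG * ρ⁻¹ * ‖μbk - μsk‖ + lB * lG * ‖sk1 - sk‖ := by ring
    have hB : lB * lG * ρ⁻¹ * ‖μbk - μsk‖ ≤ lB * lG * ρ⁻¹ * W :=
      mul_le_mul_of_nonneg_left hμW (by positivity)
    have heq : (1 + lB * lG / ρ) * W = W + lB * lG * ρ⁻¹ * W := by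
      rw [div_eq_mul_inv]; ring
    linarith
  have hRδ : ‖zbk - zinf‖ < δ := by
    have hpos : (0:ℝ) < 1 + lB * lG / ρ := by positivity
    have h1 : lB * lG * ‖sk1 - sk‖ < lB * lG * rB :=
      mul_lt_mul_of_pos_left hs (mul_pos hlB hlG)
    have h2 : (1 + lB * lG / ρ) * W < (1 + lB * lG / ρ) * (qB * ρ) :=
      mul_lt_mul_of_pos_left hw hpos
    have hc1 : lB * lG * rB = lG * lB * rB := by ring
    have hc2 : (1 + lB * lG / ρ) * (qB * ρ) = (1 + lG * lB / ρ) * (qB * ρ) := by ring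
    linarith
  have he := h3 hRδ
  set e := ‖zbk1 - zinf‖ with hedef
  have henn : 0 ≤ e := norm_nonneg _
  have hμdiff : ‖(μbk + ρ • g zbk1) - (μbk + ρ • g zinf)‖ ≤ ρ * lg * e := by
    have hrw : (μbk + ρ • g zbk1) - (μbk + ρ • g zinf) = ρ • (g zbk1 - g zinf) := by
      rw [smul_sub]; abel
    rw [hrw, norm_smul, Real.norm_eq_abs, abs_of_pos hρ]
    calc ρ * ‖g zbk1 - g zinf‖ ≤ ρ * (lg * e) :=
          mul_le_mul_of_nonneg_left h4 (le_of_lt hρ)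
      _ = ρ * lg * e := by ring
  have hLHS : Real.sqrt (‖zbk1 - zinf‖ ^ 2 +
      ‖(μbk + ρ • g zbk1) - (μbk + ρ • g zinf)‖ ^ 2) ≤ (1 + ρ * lg) * e := by
    have hm2 : ‖(μbk + ρ • g zbk1) - (μbk + ρ • g zinf)‖ ^ 2 ≤ (ρ * lg * e) ^ 2 :=
      pow_le_pow_left₀ (norm_nonneg _) hμdiff 2
    have h := Real.sqrt_le_sqrt (show ‖zbk1 - zinf‖ ^ 2 +
        ‖(μbk + ρ • g zbk1) - (μbk + ρ • g zinf)‖ ^ 2 ≤ ((1 + ρ * lg) * e) ^ 2 by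
      nlinarith [sq_nonneg e, mul_pos hρ hlg, mul_nonneg (mul_nonneg hρ.le hlg.le) (mul_nonneg henn henn)])
    rwa [Real.sqrt_sq (by positivity)] at h
  have hfinal : (1 + ρ * lg) * e
      ≤ C * (1 + ρ * lg) * ψ * (lB * lG * ‖sk1 - sk‖ + (1 + lB * lG / ρ) * W) := by
    have ha : (1 + ρ * lg) * e ≤ (1 + ρ * lg) * (C * ψ * ‖zbk - zinf‖) :=
      mul_le_mul_of_nonneg_left he (by positivity)
    have hb : C * ψ * ‖zbk - zinf‖
        ≤ C * ψ * (lB * lG * ‖sk1 - sk‖ + (1 + lB * lG / ρ) * W) :=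
      mul_le_mul_of_nonneg_left hRbound (by positivity)
    have hc := mul_le_mul_of_nonneg_left hb (show (0:ℝ) ≤ 1 + ρ * lg by positivity)
    have hd : (1 + ρ * lg) * (C * ψ * (lB * lG * ‖sk1 - sk‖ + (1 + lB * lG / ρ) * W))
        = C * (1 + ρ * lg) * ψ * (lB * lG * ‖sk1 - sk‖ + (1 + lB * lG / ρ) * W) := by ring
    linarith
  exact le_trans hLHS hfinal
end

section
/- Let n, m, p be positive integers and let all norms be Euclidean. Let u ∈ ℝⁿ, v, Δd ∈ ℝᵐ, Δs ∈ ℝᵖ and λ_F > 0. If √(‖u‖² + ‖v‖²) ≤ λ_F·‖Δs‖, then √(‖u‖² + ‖v + Δd‖²) ≤ √(max{λ_F², 1} + λ_F) · √(‖Δd‖² + ‖Δs‖²). -/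
theorem lipschitz_constant_G
    (n m p : ℕ) (hn : 0 < n) (hm : 0 < m) (hp : 0 < p)
    (u : EuclideanSpace ℝ (Fin n))
    (v Δd : EuclideanSpace ℝ (Fin m))
    (Δs : EuclideanSpace ℝ (Fin p))
    (lF : ℝ) (hlF : 0 < lF)
    (h : Real.sqrt (‖u‖ ^ 2 + ‖v‖ ^ 2) ≤ lF * ‖Δs‖) :
    Real.sqrt (‖u‖ ^ 2 + ‖v + Δd‖ ^ 2)
      ≤ Real.sqrt (max (lF ^ 2) 1 + lF) * Real.sqrt (‖Δd‖ ^ 2 + ‖Δs‖ ^ 2) := by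
  have hnn : (0:ℝ) ≤ ‖u‖ ^ 2 + ‖v‖ ^ 2 := by positivity
  have h2 : ‖u‖ ^ 2 + ‖v‖ ^ 2 ≤ (lF * ‖Δs‖) ^ 2 := by
    have := Real.sq_sqrt hnn
    nlinarith [Real.sqrt_nonneg (‖u‖ ^ 2 + ‖v‖ ^ 2)]
  have hv : ‖v‖ ≤ lF * ‖Δs‖ := by
    nlinarith [norm_nonneg v, norm_nonneg u, norm_nonneg Δs, hlF.le,
      mul_nonneg hlF.le (norm_nonneg Δs)]
  have htri : ‖v + Δd‖ ≤ ‖v‖ + ‖Δd‖ := norm_add_le _ _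
  have hM : lF ^ 2 ≤ max (lF ^ 2) 1 := le_max_left _ _
  have h1 : (1:ℝ) ≤ max (lF ^ 2) 1 := le_max_right _ _
  have key : ‖u‖ ^ 2 + ‖v + Δd‖ ^ 2
      ≤ (max (lF ^ 2) 1 + lF) * (‖Δd‖ ^ 2 + ‖Δs‖ ^ 2) := by
    have hsq : ‖v + Δd‖ ^ 2 ≤ (‖v‖ + ‖Δd‖) ^ 2 := by
      have := norm_nonneg (v + Δd)
      nlinarith [htri]
    nlinarith [mul_le_mul_of_nonneg_right hv (norm_nonneg Δd),
      mul_nonneg hlF.le (sq_nonneg (‖Δs‖ - ‖Δd‖)),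
      mul_le_mul_of_nonneg_right hM (sq_nonneg ‖Δs‖),
      mul_le_mul_of_nonneg_right h1 (sq_nonneg ‖Δd‖),
      mul_le_mul_of_nonneg_left hv (norm_nonneg Δd)]
  calc Real.sqrt (‖u‖ ^ 2 + ‖v + Δd‖ ^ 2)
      ≤ Real.sqrt ((max (lF ^ 2) 1 + lF) * (‖Δd‖ ^ 2 + ‖Δs‖ ^ 2)) :=
        Real.sqrt_le_sqrt key
    _ = _ := Real.sqrt_mul (by positivity) _
end
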